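/- Let n ≥ 2, ℓ, k ≥ 1, let Y ∈ ℝ^{n×ℓ} satisfy Yᵀ𝟙 = 0, and let Z ∈ ℝ^{n×k} satisfy Zᵀ𝟙 = 0, rank(Z) = k, and the first-order criticality condition (Δ*∘Δ)(ZZᵀ − YYᵀ)·Z = 0. Then the matrix C = (Δ*∘Δ)(ZZᵀ − YYᵀ) is negative semidefinite. -/

import Mathlib

open Matrix

namespace SNL

noncomputable def delta {n : ℕ} (X : Matrix (Fin n) (Fin n) ℝ) : Matrix (Fin n) (Fin n) ℝ :=
  Matrix.of fun i j => (X i i + X j j - 2 * X i j) / 2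

noncomputable def deltaStar {n : ℕ} (H : Matrix (Fin n) (Fin n) ℝ) : Matrix (Fin n) (Fin n) ℝ :=
  Matrix.diagonal (fun i => ∑ k, H i k) - H

def frobInner {n m : ℕ} (X Y : Matrix (Fin n) (Fin m) ℝ) : ℝ := ∑ i, ∑ j, X i j * Y i j

def frobNormSq {n m : ℕ} (X : Matrix (Fin n) (Fin m) ℝ) : ℝ := frobInner X X

noncomputable def snlCost {n ℓ k : ℕ} (Y : Matrix (Fin n) (Fin ℓ) ℝ)
    (Z : Matrix (Fin n) (Fin k) ℝ) : ℝ :=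
  frobNormSq (delta (Z * Zᵀ - Y * Yᵀ))

def IsFirstOrderCritical {n ℓ k : ℕ} (Y : Matrix (Fin n) (Fin ℓ) ℝ)
    (Z : Matrix (Fin n) (Fin k) ℝ) : Prop :=
  deltaStar (delta (Z * Zᵀ - Y * Yᵀ)) * Z = 0

def IsSecondOrderCritical {n ℓ k : ℕ} (Y : Matrix (Fin n) (Fin ℓ) ℝ)
    (Z : Matrix (Fin n) (Fin k) ℝ) : Prop :=
  IsFirstOrderCritical Y Z ∧
    ∀ W : Matrix (Fin n) (Fin k) ℝ,
      0 ≤ frobInner (W * Wᵀ) (deltaStar (delta (Z * Zᵀ - Y * Yᵀ)))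
          + (1 / 2) * frobNormSq (delta (W * Zᵀ + Z * Wᵀ))

noncomputable def centering (n : ℕ) : Matrix (Fin n) (Fin n) ℝ :=
  1 - ((n : ℝ)⁻¹) • Matrix.of (fun _ _ => (1 : ℝ))

def diagM {n : ℕ} (X : Matrix (Fin n) (Fin n) ℝ) : Matrix (Fin n) (Fin n) ℝ :=
  Matrix.diagonal (fun i => X i i)

noncomputable def Gamma {n : ℕ} (X : Matrix (Fin n) (Fin n) ℝ) : Matrix (Fin n) (Fin n) ℝ :=
  centering n * diagM X * centering n

noncomputable def Psi {n : ℕ} (X : Matrix (Fin n) (Fin n) ℝ) : Matrix (Fin n) (Fin n) ℝ :=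
  ((n : ℝ) / 2) • (centering n * diagM X * centering n) +
    ((1 / 2) * Matrix.trace X) • centering n

noncomputable def lambdaMax {n : ℕ} (X : Matrix (Fin n) (Fin n) ℝ) : ℝ :=
  sSup {r : ℝ | ∃ v : Fin n → ℝ, (∑ i, v i ^ 2) = 1 ∧ r = v ⬝ᵥ (X *ᵥ v)}

end SNL

open SNL Matrix

section AuxStatement8

/-- If `t * a + t^2 * b ≤ 0` for all real `t`, then `a = 0`. -/
private lemma aux_linquad {a b : ℝ} (h : ∀ t : ℝ, t * a + t ^ 2 * b ≤ 0) : a = 0 := by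
  by_contra ha
  set d : ℝ := |b| + 1 with hd
  have hdpos : (0 : ℝ) < d := by positivity
  have ht := h (a / d)
  have e1 : a / d * a + (a / d) ^ 2 * b = a ^ 2 * (d + b) / d ^ 2 := by
    field_simp
  rw [e1] at ht
  have h2 : 0 < a ^ 2 := by positivity
  have h3 : 0 < d + b := by
    have := neg_abs_le b
    simp only [hd]
    linarith
  have h4 : 0 < a ^ 2 * (d + b) / d ^ 2 := by positivity
  linarith


private lemma aux_single_sum_sq {n : ℕ} (i : Fin n) :
    ∑ j, ((Pi.single i (1:ℝ) : Fin n → ℝ) j) ^ 2 = 1 := by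
  have e : ∀ j : Fin n, ((Pi.single i (1:ℝ) : Fin n → ℝ) j) ^ 2 = if j = i then 1 else 0 := by
    intro j
    rcases eq_or_ne j i with h | h <;> simp [Pi.single_apply, h]
  rw [Finset.sum_congr rfl fun j _ => e j]
  simp

private lemma aux_single_sum {n : ℕ} (i : Fin n) :
    ∑ j, (Pi.single i (1:ℝ) : Fin n → ℝ) j = 1 := by
  have e : ∀ j : Fin n, (Pi.single i (1:ℝ) : Fin n → ℝ) j = if j = i then 1 else 0 := by
    intro j
    rcases eq_or_ne j i with h | h <;> simp [Pi.single_apply, h]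
  rw [Finset.sum_congr rfl fun j _ => e j]
  simp

private lemma aux_dot_symm {n : ℕ} (C : Matrix (Fin n) (Fin n) ℝ)
    (hsym : ∀ i j, C i j = C j i) (x y : Fin n → ℝ) :
    x ⬝ᵥ (C *ᵥ y) = y ⬝ᵥ (C *ᵥ x) := by
  simp only [dotProduct, mulVec, Finset.mul_sum]
  rw [Finset.sum_comm]
  refine Finset.sum_congr rfl fun i _ => Finset.sum_congr rfl fun j _ => ?_
  rw [hsym j i]
  ring

/-- A maximizer of the Rayleigh quotient is an eigenvector. -/
private lemma aux_eig {n : ℕ} (C : Matrix (Fin n) (Fin n) ℝ)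
    (hsym : ∀ i j, C i j = C j i) (μ : ℝ)
    (hle : ∀ x : Fin n → ℝ, x ⬝ᵥ (C *ᵥ x) ≤ μ * (∑ i, (x i) ^ 2))
    (u : Fin n → ℝ) (hu : ∑ i, (u i) ^ 2 = 1) (hfu : u ⬝ᵥ (C *ᵥ u) = μ) :
    C *ᵥ u = μ • u := by
  have hds : ∀ y : Fin n → ℝ, y ⬝ᵥ y = ∑ i, (y i) ^ 2 := by
    intro y; simp only [dotProduct]; exact Finset.sum_congr rfl fun i _ => (sq (y i)).symm
  have key : ∀ w : Fin n → ℝ, 2 * (w ⬝ᵥ (C *ᵥ u)) - 2 * (μ * (w ⬝ᵥ u)) = 0 := by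
    intro w
    apply aux_linquad (b := w ⬝ᵥ (C *ᵥ w) - μ * (w ⬝ᵥ w))
    intro t
    have h2 := hle (u + t • w)
    have eL : (u + t • w) ⬝ᵥ (C *ᵥ (u + t • w))
        = u ⬝ᵥ (C *ᵥ u) + 2 * t * (w ⬝ᵥ (C *ᵥ u)) + t ^ 2 * (w ⬝ᵥ (C *ᵥ w)) := by
      rw [mulVec_add, mulVec_smul, dotProduct_add, add_dotProduct, add_dotProduct,
        dotProduct_smul, smul_dotProduct, dotProduct_smul, smul_dotProduct,
        aux_dot_symm C hsym u w]
      simp only [smul_eq_mul]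
      ring
    have eR : ∑ i, ((u + t • w) i) ^ 2 = 1 + 2 * t * (w ⬝ᵥ u) + t ^ 2 * (w ⬝ᵥ w) := by
      rw [← hds]
      rw [dotProduct_add, add_dotProduct, add_dotProduct, dotProduct_smul, smul_dotProduct,
        dotProduct_smul, smul_dotProduct, hds u, hu, dotProduct_comm u w]
      simp only [smul_eq_mul]
      ring
    rw [eL, eR, hfu] at h2
    nlinarith [h2]
  funext i
  have hw := key (Pi.single i (1:ℝ))
  rw [single_dotProduct, single_dotProduct] at hw
  simp only [one_mul] at hw
  have : (C *ᵥ u) i = μ * u i := by linarith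
  simpa [Pi.smul_apply, smul_eq_mul] using this

/-- Main abstract lemma: a symmetric matrix with zero row sums whose positive
eigenvectors satisfy the diagonal-domination inequality is negative semidefinite. -/
private lemma aux_main {n : ℕ} [NeZero n] (C : Matrix (Fin n) (Fin n) ℝ)
    (hsym : ∀ i j, C i j = C j i)
    (hrow : ∀ i, ∑ j, C i j = 0)
    (hquad : ∀ (μ : ℝ) (v : Fin n → ℝ), 0 < μ → C *ᵥ v = μ • v →
      v ⬝ᵥ (C *ᵥ v) ≤ ∑ i, C i i * (v i) ^ 2)
    (x : Fin n → ℝ) : x ⬝ᵥ (C *ᵥ x) ≤ 0 := by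
  by_contra hpos
  push_neg at hpos
  -- the sphere
  set S : Set (Fin n → ℝ) := {y | ∑ i, (y i) ^ 2 = 1} with hS
  have hsumcont : Continuous fun y : Fin n → ℝ => ∑ i, (y i) ^ 2 :=
    continuous_finset_sum _ fun i _ => (continuous_apply i).pow 2
  have hfcont : Continuous fun y : Fin n → ℝ => y ⬝ᵥ (C *ᵥ y) := by
    show Continuous fun y : Fin n → ℝ => ∑ i, y i * ∑ j, C i j * y j
    exact continuous_finset_sum _ fun i _ => (continuous_apply i).mul
      (continuous_finset_sum _ fun j _ => continuous_const.mul (continuous_apply j))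
  have hSclosed : IsClosed S := isClosed_eq hsumcont continuous_const
  have hSsub : S ⊆ Metric.closedBall (0 : Fin n → ℝ) 1 := by
    intro y hy
    rw [Metric.mem_closedBall, dist_zero_right]
    rw [pi_norm_le_iff_of_nonneg zero_le_one]
    intro i
    rw [Real.norm_eq_abs]
    have h1 : (y i) ^ 2 ≤ 1 := by
      have := Finset.single_le_sum (f := fun j => (y j) ^ 2)
        (fun j _ => sq_nonneg (y j)) (Finset.mem_univ i)
      rw [hy] at this
      exact this
    nlinarith [abs_nonneg (y i), sq_abs (y i)]
  have hScompact : IsCompact S :=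
    (isCompact_closedBall (0 : Fin n → ℝ) 1).of_isClosed_subset hSclosed hSsub
  have hSne : S.Nonempty :=
    ⟨(Pi.single (0 : Fin n) (1 : ℝ) : Fin n → ℝ), aux_single_sum_sq (0 : Fin n)⟩
  obtain ⟨v, hvS, hvmax⟩ := hScompact.exists_isMaxOn hSne hfcont.continuousOn
  have hvmax' : ∀ y ∈ S, y ⬝ᵥ (C *ᵥ y) ≤ v ⬝ᵥ (C *ᵥ v) := fun y hy => hvmax hy
  set μ : ℝ := v ⬝ᵥ (C *ᵥ v) with hμ
  have hv1 : ∑ i, (v i) ^ 2 = 1 := hvS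
  -- global Rayleigh bound
  have hle : ∀ y : Fin n → ℝ, y ⬝ᵥ (C *ᵥ y) ≤ μ * (∑ i, (y i) ^ 2) := by
    intro y
    rcases eq_or_ne (∑ i, (y i) ^ 2) 0 with h0 | h0
    · have hy0 : y = 0 := by
        funext i
        have h1 : (y i) ^ 2 = 0 := by
          have hle' := Finset.single_le_sum (f := fun j => (y j) ^ 2)
            (fun j _ => sq_nonneg (y j)) (Finset.mem_univ i)
          rw [h0] at hle'
          exact le_antisymm hle' (sq_nonneg _)
        exact sq_eq_zero_iff.mp h1
      rw [hy0]
      simp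
    · have hspos : 0 < ∑ i, (y i) ^ 2 :=
        lt_of_le_of_ne (Finset.sum_nonneg fun i _ => sq_nonneg _) (Ne.symm h0)
      set c : ℝ := Real.sqrt (∑ i, (y i) ^ 2) with hc
      have hcpos : 0 < c := Real.sqrt_pos.mpr hspos
      have hc2 : c ^ 2 = ∑ i, (y i) ^ 2 := Real.sq_sqrt hspos.le
      have hmem : c⁻¹ • y ∈ S := by
        show (∑ i, ((c⁻¹ • y) i) ^ 2) = 1
        have : ∀ i : Fin n, ((c⁻¹ • y) i) ^ 2 = c⁻¹ ^ 2 * (y i) ^ 2 := by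
          intro i; simp [Pi.smul_apply, smul_eq_mul, mul_pow]
        rw [Finset.sum_congr rfl fun i _ => this i, ← Finset.mul_sum, ← hc2]
        field_simp
      have hb := hvmax' _ hmem
      have hsc : (c⁻¹ • y) ⬝ᵥ (C *ᵥ (c⁻¹ • y)) = c⁻¹ ^ 2 * (y ⬝ᵥ (C *ᵥ y)) := by
        rw [mulVec_smul, dotProduct_smul, smul_dotProduct]
        simp only [smul_eq_mul]
        ring
      rw [hsc] at hb
      have := mul_le_mul_of_nonneg_left hb (le_of_lt (by positivity : (0:ℝ) < c ^ 2))
      calc y ⬝ᵥ (C *ᵥ y) = c ^ 2 * (c⁻¹ ^ 2 * (y ⬝ᵥ (C *ᵥ y))) := by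
            field_simp
        _ ≤ c ^ 2 * μ := this
        _ = μ * (∑ i, (y i) ^ 2) := by rw [← hc2]; ring
  -- μ > 0
  have hμpos : 0 < μ := by
    by_contra hμn
    push_neg at hμn
    have h1 := hle x
    have h2 : μ * (∑ i, (x i) ^ 2) ≤ 0 :=
      mul_nonpos_of_nonpos_of_nonneg hμn (Finset.sum_nonneg fun i _ => sq_nonneg _)
    linarith
  -- v is an eigenvector
  have hveig : C *ᵥ v = μ • v := aux_eig C hsym μ hle v hv1 rfl
  -- the key inequality from the structure of C
  have h1 : μ ≤ ∑ i, C i i * (v i) ^ 2 := by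
    have := hquad μ v hμpos hveig
    rw [← hμ] at this
    exact this
  -- diagonal entries bounded by μ
  have hdiag : ∀ i, C i i ≤ μ := by
    intro i
    have hsingle : (Pi.single i (1:ℝ)) ⬝ᵥ (C *ᵥ Pi.single i (1:ℝ)) = C i i := by
      rw [mulVec_single, single_dotProduct]
      simp
    have hsum1 := aux_single_sum_sq i
    have := hle (Pi.single i (1:ℝ))
    rw [hsingle, hsum1, mul_one] at this
    exact this
  have h2 : ∑ i, C i i * (v i) ^ 2 ≤ μ := by
    calc ∑ i, C i i * (v i) ^ 2 ≤ ∑ i, μ * (v i) ^ 2 :=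
          Finset.sum_le_sum fun i _ => mul_le_mul_of_nonneg_right (hdiag i) (sq_nonneg _)
      _ = μ * (∑ i, (v i) ^ 2) := by rw [Finset.mul_sum]
      _ = μ := by rw [hv1, mul_one]
  have heq : ∑ i, C i i * (v i) ^ 2 = μ := le_antisymm h2 h1
  -- each term must be tight
  have h3 : ∑ i, (μ - C i i) * (v i) ^ 2 = 0 := by
    have e : ∑ i, (μ - C i i) * (v i) ^ 2
        = μ * (∑ i, (v i) ^ 2) - ∑ i, C i i * (v i) ^ 2 := by
      rw [Finset.mul_sum, ← Finset.sum_sub_distrib]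
      exact Finset.sum_congr rfl fun i _ => by ring
    rw [e, hv1, mul_one, heq, sub_self]
  have h4 := (Finset.sum_eq_zero_iff_of_nonneg
    (fun i _ => mul_nonneg (by linarith [hdiag i]) (sq_nonneg (v i)))).mp h3
  -- some coordinate of v is nonzero
  obtain ⟨i0, hi0⟩ : ∃ i, v i ≠ 0 := by
    by_contra hall
    push_neg at hall
    have : ∑ i, (v i) ^ 2 = 0 := Finset.sum_eq_zero fun i _ => by rw [hall i]; ring
    rw [hv1] at this
    norm_num at this
  have hCi0 : C i0 i0 = μ := by
    have := h4 i0 (Finset.mem_univ i0)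
    have hv2 : (v i0) ^ 2 ≠ 0 := pow_ne_zero 2 hi0
    rcases mul_eq_zero.mp this with h | h
    · linarith
    · exact absurd h hv2
  -- e_{i0} is then also a maximizer, hence an eigenvector
  have hsingle : (Pi.single i0 (1:ℝ)) ⬝ᵥ (C *ᵥ Pi.single i0 (1:ℝ)) = C i0 i0 := by
    rw [mulVec_single, single_dotProduct]
    simp
  have hsum1 := aux_single_sum_sq i0
  have heig2 : C *ᵥ (Pi.single i0 (1:ℝ) : Fin n → ℝ) = μ • (Pi.single i0 (1:ℝ) : Fin n → ℝ) :=
    aux_eig C hsym μ hle _ hsum1 (by rw [hsingle, hCi0])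
  -- summing the coordinates gives μ = 0, contradiction
  have hcol : ∀ j, ∑ i, C i j = 0 := by
    intro j
    calc ∑ i, C i j = ∑ i, C j i := Finset.sum_congr rfl fun i _ => hsym i j
      _ = 0 := hrow j
  have hL : ∑ j, (C *ᵥ (Pi.single i0 (1:ℝ))) j = 0 := by
    rw [mulVec_single]
    simpa [Matrix.col] using hcol i0
  have hR : ∑ j, (μ • (Pi.single i0 (1:ℝ) : Fin n → ℝ)) j = μ := by
    simp only [Pi.smul_apply, smul_eq_mul]
    rw [← Finset.mul_sum, aux_single_sum i0, mul_one]
  rw [heig2, hR] at hL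
  linarith

end AuxStatement8

theorem statement_8 {n ℓ k : ℕ} (hn : 2 ≤ n) (hℓ : 1 ≤ ℓ) (hk : 1 ≤ k)
    (Y : Matrix (Fin n) (Fin ℓ) ℝ) (hY : Yᵀ *ᵥ (fun _ => (1 : ℝ)) = 0)
    (Z : Matrix (Fin n) (Fin k) ℝ) (hZc : Zᵀ *ᵥ (fun _ => (1 : ℝ)) = 0)
    (hZrank : Z.rank = k)
    (h1 : IsFirstOrderCritical Y Z) :
    (-(deltaStar (delta (Z * Zᵀ - Y * Yᵀ)))).PosSemidef := by
  classical
  haveI : NeZero n := ⟨by omega⟩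
  have h1' : deltaStar (delta (Z * Zᵀ - Y * Yᵀ)) * Z = 0 := h1
  set X : Matrix (Fin n) (Fin n) ℝ := Z * Zᵀ - Y * Yᵀ with hXdef
  set D : Matrix (Fin n) (Fin n) ℝ := delta X with hDdef
  set C : Matrix (Fin n) (Fin n) ℝ := deltaStar D with hCdef
  -- symmetry of X and D and C
  have hXs : ∀ i j, X i j = X j i := by
    intro i j
    have hXsym : Xᵀ = X := by
      rw [hXdef, transpose_sub, transpose_mul, transpose_mul,
        transpose_transpose, transpose_transpose]
    conv_rhs => rw [← hXsym]
    rfl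
  have hDs : ∀ i j, D i j = D j i := by
    intro i j
    simp only [hDdef, delta, Matrix.of_apply]
    rw [hXs i j]
    ring
  have hD0 : ∀ i, D i i = 0 := by
    intro i
    simp only [hDdef, delta, Matrix.of_apply]
    ring
  have hsym : ∀ i j, C i j = C j i := by
    intro i j
    by_cases h : i = j
    · subst h; rfl
    · simp only [hCdef, deltaStar, Matrix.sub_apply, diagonal_apply_ne _ h,
        diagonal_apply_ne _ (Ne.symm h)]
      rw [hDs i j]
  have hrow : ∀ i, ∑ j, C i j = 0 := by
    intro i
    simp only [hCdef, deltaStar, Matrix.sub_apply]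
    rw [Finset.sum_sub_distrib]
    have hdg : ∑ j, diagonal (fun i => ∑ k, D i k) i j = ∑ k, D i k := by
      simp [diagonal_apply, Finset.sum_ite_eq]
    rw [hdg, sub_self]
  have hCii : ∀ i, C i i = ∑ k, D i k := by
    intro i
    simp only [hCdef, deltaStar, Matrix.sub_apply, diagonal_apply_eq]
    rw [hD0 i, sub_zero]
  -- the structural inequality for positive eigenvectors
  have hquad : ∀ (μ : ℝ) (v : Fin n → ℝ), 0 < μ → C *ᵥ v = μ • v →
      v ⬝ᵥ (C *ᵥ v) ≤ ∑ i, C i i * (v i) ^ 2 := by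
    intro μ v hμ hv
    -- coordinates of v sum to zero
    have hcol : ∀ j, ∑ i, C i j = 0 := by
      intro j
      calc ∑ i, C i j = ∑ i, C j i := Finset.sum_congr rfl fun i _ => hsym i j
        _ = 0 := hrow j
    have hv1 : ∑ i, v i = 0 := by
      have h0 : ∑ i, (C *ᵥ v) i = 0 := by
        simp only [mulVec, dotProduct]
        rw [Finset.sum_comm]
        calc ∑ j, ∑ i, C i j * v j = ∑ j, (∑ i, C i j) * v j := by
              exact Finset.sum_congr rfl fun j _ => (Finset.sum_mul _ _ _).symm
          _ = 0 := by simp [hcol]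
      rw [hv] at h0
      simp only [Pi.smul_apply, smul_eq_mul] at h0
      rw [← Finset.mul_sum] at h0
      rcases mul_eq_zero.mp h0 with h | h
      · exact absurd h hμ.ne'
      · exact h
    -- Zᵀ v = 0
    have hZv : Zᵀ *ᵥ v = 0 := by
      have hCsymM : Cᵀ = C := by
        ext i j
        exact hsym j i
      have hZC : Zᵀ * C = 0 := by
        calc Zᵀ * C = Zᵀ * Cᵀ := by rw [hCsymM]
          _ = (C * Z)ᵀ := by rw [← transpose_mul]
          _ = 0 := by rw [h1', transpose_zero]
      have e1 : Zᵀ *ᵥ (C *ᵥ v) = 0 := by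
        rw [mulVec_mulVec, hZC, zero_mulVec]
      rw [hv, mulVec_smul] at e1
      rcases smul_eq_zero.mp e1 with h | h
      · exact absurd h hμ.ne'
      · exact h
    -- quadratic identity
    have hCv : v ⬝ᵥ (C *ᵥ v) = (∑ i, (∑ k, D i k) * (v i) ^ 2) - v ⬝ᵥ (D *ᵥ v) := by
      rw [hCdef]
      show v ⬝ᵥ ((Matrix.diagonal (fun i => ∑ k, D i k) - D) *ᵥ v) = _
      rw [sub_mulVec, dotProduct_sub]
      congr 1
      simp only [dotProduct, mulVec_diagonal]
      exact Finset.sum_congr rfl fun i _ => by ring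
    have hDvX : v ⬝ᵥ (D *ᵥ v) = - (v ⬝ᵥ (X *ᵥ v)) := by
      have hDi : ∀ i, (D *ᵥ v) i = (∑ j, X j j * v j) / 2 - (X *ᵥ v) i := by
        intro i
        simp only [mulVec, dotProduct, hDdef, delta, Matrix.of_apply]
        have e : ∀ j, (X i i + X j j - 2 * X i j) / 2 * v j
            = X i i / 2 * v j + X j j * v j / 2 - X i j * v j := fun j => by ring
        rw [Finset.sum_congr rfl fun j _ => e j]
        rw [Finset.sum_sub_distrib, Finset.sum_add_distrib]
        have e1 : ∑ j, X i i / 2 * v j = 0 := by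
          rw [← Finset.mul_sum, hv1, mul_zero]
        have e2 : ∑ j, X j j * v j / 2 = (∑ j, X j j * v j) / 2 := by
          rw [← Finset.sum_div]
        rw [e1, e2, zero_add]
      calc v ⬝ᵥ (D *ᵥ v)
          = ∑ i, v i * ((∑ j, X j j * v j) / 2 - (X *ᵥ v) i) := by
            simp only [dotProduct]
            exact Finset.sum_congr rfl fun i _ => by rw [hDi i]
        _ = (∑ i, v i) * ((∑ j, X j j * v j) / 2) - ∑ i, v i * (X *ᵥ v) i := by
            rw [Finset.sum_congr rfl fun i _ =>
              (by ring : v i * ((∑ j, X j j * v j) / 2 - (X *ᵥ v) i)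
                = v i * ((∑ j, X j j * v j) / 2) - v i * (X *ᵥ v) i),
              Finset.sum_sub_distrib, ← Finset.sum_mul]
        _ = - (v ⬝ᵥ (X *ᵥ v)) := by
            rw [hv1, zero_mul, zero_sub]
            rfl
    have hXv : v ⬝ᵥ (X *ᵥ v) ≤ 0 := by
      have eX : X *ᵥ v = Z *ᵥ (Zᵀ *ᵥ v) - Y *ᵥ (Yᵀ *ᵥ v) := by
        rw [hXdef, sub_mulVec, mulVec_mulVec, mulVec_mulVec]
      rw [eX, hZv, mulVec_zero, zero_sub, dotProduct_neg]
      have eY : v ⬝ᵥ (Y *ᵥ (Yᵀ *ᵥ v)) = (Yᵀ *ᵥ v) ⬝ᵥ (Yᵀ *ᵥ v) := by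
        rw [dotProduct_mulVec, ← mulVec_transpose]
      rw [eY]
      have : 0 ≤ (Yᵀ *ᵥ v) ⬝ᵥ (Yᵀ *ᵥ v) :=
        Finset.sum_nonneg fun i _ => mul_self_nonneg _
      linarith
    rw [hCv, hDvX]
    have e3 : ∑ i, C i i * (v i) ^ 2 = ∑ i, (∑ k, D i k) * (v i) ^ 2 :=
      Finset.sum_congr rfl fun i _ => by rw [hCii i]
    rw [e3]
    linarith
  rw [posSemidef_iff_dotProduct_mulVec]
  constructor
  · -- IsHermitian
    show (-C)ᴴ = -C
    rw [conjTranspose_neg]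
    congr 1
    ext i j
    simp only [conjTranspose_apply, star_trivial]
    exact hsym j i
  · intro x
    have hmain := aux_main C hsym hrow hquad x
    have e : star x ⬝ᵥ ((-C) *ᵥ x) = - (x ⬝ᵥ (C *ᵥ x)) := by
      rw [neg_mulVec, dotProduct_neg, star_trivial]
    rw [e]
    linarith
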